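/- Lyapunov function for tempered log-concave densities: let ν be an (l^{−2}, l^{−2}𝒞)-log-concave density on ℝ^d with mode m, let β ∈ (0,1], let μ be the density proportional to ν^β, and set λ_β = β l^{−2} and R_β = √(4d/λ_β). Then V(x) = (λ_β/(2d))‖x−m‖² + 1 is a (λ_β, 2λ_β, B(m, R_β), exp(2d𝒞))-Lyapunov function for μ; in particular L_μ V(x) ≤ −λ_β V(x) + 2λ_β·1_{‖x−m‖² ≤ 4d/λ_β}(x) for all x, and sup_{x∈B(m,R_β)} μ(x) / inf_{x∈B(m,R_β)} μ(x) ≤ exp(2d𝒞). -/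

import Mathlib

open MeasureTheory RealInnerProductSpace

noncomputable section

abbrev Euc (d : ℕ) := EuclideanSpace ℝ (Fin d)

def IsDensity {d : ℕ} (ρ : Euc d → ℝ) : Prop :=
  (∀ x, 0 ≤ ρ x) ∧ ∫ x, ρ x = 1

def lap {d : ℕ} (f : Euc d → ℝ) (x : Euc d) : ℝ :=
  ∑ i : Fin d, fderiv ℝ (fun y => fderiv ℝ f y (EuclideanSpace.single i 1)) x (EuclideanSpace.single i 1)

def LGen {d : ℕ} (ν V : Euc d → ℝ) (x : Euc d) : ℝ :=
  ⟪gradient V x, gradient (fun y => Real.log (ν y)) x⟫ + lap V x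

structure IsLyapunov {d : ℕ} (ν V : Euc d → ℝ) (lam h : ℝ) (B : Set (Euc d)) (C : ℝ) : Prop where
  contDiff : ContDiff ℝ 2 V
  one_le : ∀ x, 1 ≤ V x
  lam_pos : 0 < lam
  h_pos : 0 < h
  C_pos : 0 < C
  bounded : Bornology.IsBounded B
  drift : ∀ x, LGen ν V x ≤ -lam * V x + h * B.indicator 1 x
  ratio : ∀ x ∈ B, ∀ y ∈ B, ν x ≤ C * ν y

def uball {d : ℕ} (x₀ : Euc d) (R : ℝ) (x : Euc d) : ℝ :=
  (Metric.closedBall x₀ R).indicator (fun _ => ((volume (Metric.closedBall x₀ R)).toReal)⁻¹) x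

def IsLyDensity {d : ℕ} (ν : Euc d → ℝ) (x₀ : Euc d) (R q a : ℝ) : Prop :=
  ∃ V lam h C, IsLyapunov ν V lam h (Metric.closedBall x₀ R) C ∧
    (1 + h * R ^ 2 * C ^ 2) / lam ≤ q ∧
    ∀ x ∈ Metric.closedBall x₀ R, uball x₀ R x ≤ a * ν x

def Vball (d : ℕ) : ℝ := (volume (Metric.closedBall (0 : Euc d) 1)).toReal

def IsLogConcave {d : ℕ} (ν : Euc d → ℝ) (c L : ℝ) : Prop :=
  ContDiff ℝ 2 (fun x => -Real.log (ν x)) ∧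
  (∀ x y : Euc d, c * ‖x - y‖ ^ 2 ≤
      ⟪gradient (fun z => -Real.log (ν z)) x - gradient (fun z => -Real.log (ν z)) y, x - y⟫) ∧
  (∀ x : Euc d, ‖fderiv ℝ (fun z => gradient (fun w => -Real.log (ν w)) z) x‖ ≤ L)

def GammaR {d : ℕ} (π πy : Euc d → ℝ) (τ ρ : ℝ) (f : Euc d × Euc d → ℝ) (x y : Euc d) : ℝ :=
  ‖gradient (fun x' => f (x', y)) x‖ ^ 2 + τ * ‖gradient (fun y' => f (x, y')) y‖ ^ 2 +
    (ρ / 2) * min 1 (π y * πy x / (π x * πy y)) * (f (y, x) - f (x, y)) ^ 2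

section Aux

open InnerProductSpace

/-- gradient of the quadratic Lyapunov function. -/
theorem aux_quad_grad {d : ℕ} (a : ℝ) (m x : Euc d) :
    HasGradientAt (fun x => a * ‖x - m‖ ^ 2 + 1) ((2*a) • (x - m)) x := by
  have h1 : HasFDerivAt (fun x : Euc d => x - m) (ContinuousLinearMap.id ℝ (Euc d)) x :=
    (hasFDerivAt_id x).sub_const m
  have h3 := (h1.norm_sq.const_mul a).add_const 1
  rw [hasFDerivAt_iff_hasGradientAt] at h3
  convert h3 using 1
  apply (InnerProductSpace.toDual ℝ (Euc d)).injective
  ext y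
  simp [InnerProductSpace.toDual_apply_apply, real_inner_smul_left, inner_sub_left, real_inner_comm]
  ring

/-- Laplacian of the quadratic Lyapunov function. -/
theorem aux_quad_lap {d : ℕ} (a : ℝ) (m x : Euc d) :
    lap (fun x => a * ‖x - m‖ ^ 2 + 1) x = 2 * a * d := by
  have hfd : ∀ y : Euc d, ∀ e : Euc d, fderiv ℝ (fun x => a * ‖x - m‖ ^ 2 + 1) y e
      = 2 * a * ⟪y, e⟫ - 2 * a * ⟪m, e⟫ := by
    intro y e
    have h : HasFDerivAt (fun x : Euc d => a * ‖x - m‖ ^ 2 + 1)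
        (a • ((2:ℕ) • ((innerSL ℝ (y - m)).comp (ContinuousLinearMap.id ℝ (Euc d))))) y :=
      ((((hasFDerivAt_id y).sub_const m).norm_sq).const_mul a).add_const 1
    rw [h.fderiv]
    simp only [ContinuousLinearMap.smul_apply, ContinuousLinearMap.coe_comp',
      Function.comp_apply, ContinuousLinearMap.coe_id', id_eq, innerSL_apply_apply,
      smul_eq_mul, nsmul_eq_mul, Nat.cast_ofNat]
    rw [inner_sub_left]
    ring
  have key : ∀ e : Euc d, ‖e‖ = 1 →
      fderiv ℝ (fun y => fderiv ℝ (fun x => a * ‖x - m‖ ^ 2 + 1) y e) x e = 2 * a := by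
    intro e he
    have heq : (fun y => fderiv ℝ (fun x => a * ‖x - m‖ ^ 2 + 1) y e)
        = fun y => (2 * a) * (innerSL ℝ e) y - (2 * a) * ⟪m, e⟫ := by
      funext y
      rw [hfd y e]
      simp only [innerSL_apply_apply]
      rw [real_inner_comm e y]
    rw [heq]
    rw [((((innerSL ℝ e).hasFDerivAt).const_mul (2*a)).sub_const _).fderiv]
    simp only [ContinuousLinearMap.smul_apply, innerSL_apply_apply, smul_eq_mul,
      real_inner_self_eq_norm_sq, he]
    norm_num
  unfold lap
  rw [Finset.sum_congr rfl (fun i _ => key _ (by simp))]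
  simp [mul_comm]

/-- directional derivative of a C² function along a segment. -/
theorem aux_dir_deriv {d : ℕ} (H : Euc d → ℝ) (hH : ContDiff ℝ 2 H) (m u : Euc d) (t : ℝ) :
    HasDerivAt (fun t : ℝ => H (m + t • u)) ⟪gradient H (m + t • u), u⟫ t := by
  have hγ : HasDerivAt (fun t : ℝ => m + t • u) u t := by
    simpa using ((hasDerivAt_id t).smul_const u).const_add m
  have hHd : HasFDerivAt H (InnerProductSpace.toDual ℝ (Euc d) (gradient H (m + t • u)))
      (m + t • u) := ((hH.differentiable (by norm_num)) _).hasGradientAt.hasFDerivAt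
  exact (hHd.comp_hasDerivAt t hγ).congr_deriv (by rw [InnerProductSpace.toDual_apply_apply])

end Aux

set_option maxHeartbeats 1000000 in
/-- Lyapunov function for tempered log-concave densities (Lemma 3.2 of
the paper): if `ν` is `(l⁻², l⁻²𝒞)`-log-concave with mode `m` and `μ ∝ ν^β`, then
`V(x) = (λ_β/(2d))‖x−m‖² + 1` is a `(λ_β, 2λ_β, B(m,R_β), exp(2d𝒞))`-Lyapunov
function for `μ`, where `λ_β = β l⁻²` and `R_β = √(4d/λ_β)`. -/
theorem tempered_logconcave_lyapunov
    (d : ℕ) (hd : 1 ≤ d) (l 𝒞 : ℝ) (hl : 0 < l) (h𝒞 : 0 < 𝒞)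
    (ν : Euc d → ℝ) (hν : IsDensity ν) (hνpos : ∀ x, 0 < ν x)
    (hlc : IsLogConcave ν (l ^ 2)⁻¹ ((l ^ 2)⁻¹ * 𝒞))
    (m : Euc d) (hm : gradient (fun z => -Real.log (ν z)) m = 0)
    (β : ℝ) (hβ : 0 < β) (hβ1 : β ≤ 1)
    (μ : Euc d → ℝ) (hμ : IsDensity μ) (Z : ℝ) (hZ : 0 < Z)
    (hform : ∀ x, μ x = Z⁻¹ * ν x ^ β) :
    IsLyapunov μ (fun x => (β * (l ^ 2)⁻¹ / (2 * d)) * ‖x - m‖ ^ 2 + 1)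
      (β * (l ^ 2)⁻¹) (2 * (β * (l ^ 2)⁻¹))
      (Metric.closedBall m (Real.sqrt (4 * d / (β * (l ^ 2)⁻¹))))
      (Real.exp (2 * d * 𝒞)) := by
  have hdR : (1:ℝ) ≤ (d:ℝ) := by exact_mod_cast hd
  have hdpos : (0:ℝ) < (d:ℝ) := lt_of_lt_of_le zero_lt_one hdR
  set H : Euc d → ℝ := fun x => -Real.log (ν x) with hHdef
  clear_value H
  set c : ℝ := (l ^ 2)⁻¹ with hcdef
  have hc : 0 < c := by positivity
  set lam : ℝ := β * c with hlamdef
  have hlam : 0 < lam := by positivity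
  set a : ℝ := lam / (2 * (d:ℝ)) with hadef
  have ha : 0 < a := by positivity
  set R : ℝ := Real.sqrt (4 * d / lam) with hRdef
  have hR2 : R ^ 2 = 4 * d / lam := Real.sq_sqrt (by positivity)
  obtain ⟨hH0, hsc0, hhess0⟩ := hlc
  have hH : ContDiff ℝ 2 H := by rw [hHdef]; exact hH0
  have hHdiff : Differentiable ℝ H := hH.differentiable (by norm_num)
  have hgm : gradient H m = 0 := hm
  have hsc : ∀ x y : Euc d, c * ‖x - y‖ ^ 2 ≤ ⟪gradient H x - gradient H y, x - y⟫ := by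
    rw [hHdef]; exact hsc0
  have hhess : ∀ x : Euc d, ‖fderiv ℝ (fun z => gradient H z) x‖ ≤ c * 𝒞 := by
    rw [hHdef]; exact hhess0
  -- strong convexity against the mode
  have hsc' : ∀ x : Euc d, c * ‖x - m‖ ^ 2 ≤ ⟪x - m, gradient H x⟫ := by
    intro x
    have := hsc x m
    rwa [hgm, sub_zero, real_inner_comm] at this
  -- Lipschitz gradient
  have hg_diff : Differentiable ℝ (fun z => gradient H z) := by
    have h1 : ContDiff ℝ 1 (fderiv ℝ H) := hH.fderiv_right (by norm_num)
    exact ((InnerProductSpace.toDual ℝ (Euc d)).symm.differentiable).comp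
      (h1.differentiable one_ne_zero)
  have hLip : ∀ z w : Euc d, ‖gradient H z - gradient H w‖ ≤ (c * 𝒞) * ‖z - w‖ := fun z w =>
    Convex.norm_image_sub_le_of_norm_fderiv_le (fun u _ => hg_diff u)
      (fun u _ => hhess u) convex_univ trivial trivial
  -- gradient of log μ
  have hgradμ : ∀ x : Euc d, gradient (fun y => Real.log (μ y)) x = -(β • gradient H x) := by
    intro x
    have hfe : (fun y => Real.log (μ y)) = fun y => Real.log Z⁻¹ + β * -(H y) := by
      funext y
      rw [hform y, Real.log_mul (by positivity) (ne_of_gt (Real.rpow_pos_of_pos (hνpos y) β)),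
        Real.log_rpow (hνpos y)]
      simp [hHdef]
    rw [hfe]
    have hHd : HasFDerivAt H (InnerProductSpace.toDual ℝ (Euc d) (gradient H x)) x :=
      (hHdiff x).hasGradientAt.hasFDerivAt
    have h2 : HasFDerivAt (fun y => Real.log Z⁻¹ + β * -(H y))
        (InnerProductSpace.toDual ℝ (Euc d) (-(β • gradient H x))) x := by
      have := (hHd.neg.const_mul β).const_add (Real.log Z⁻¹)
      refine this.congr_fderiv ?_
      ext v
      simp [InnerProductSpace.toDual_apply_apply, inner_neg_left, real_inner_smul_left]
    rw [h2.hasGradientAt.gradient, LinearIsometryEquiv.symm_apply_apply]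
  -- lower bound : H m ≤ H x
  have hlow : ∀ x : Euc d, H m ≤ H x := by
    intro x
    set u : Euc d := x - m with hu
    have hmono : MonotoneOn (fun t : ℝ => H (m + t • u)) (Set.Icc 0 1) := by
      apply monotoneOn_of_deriv_nonneg (convex_Icc 0 1)
      · exact (hH.continuous.comp
          (continuous_const.add (continuous_id.smul continuous_const))).continuousOn
      · intro t ht
        exact ((aux_dir_deriv H hH m u t).differentiableAt).differentiableWithinAt
      · intro t ht
        rw [interior_Icc] at ht
        rw [(aux_dir_deriv H hH m u t).deriv]
        have h1 := hsc (m + t • u) m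
        rw [hgm, sub_zero, add_sub_cancel_left] at h1
        rw [real_inner_smul_right] at h1
        have h2 : (0:ℝ) ≤ c * ‖t • u‖ ^ 2 := by positivity
        nlinarith [ht.1]
    have h0 : H (m + (0:ℝ) • u) = H m := by simp
    have h1 : H (m + (1:ℝ) • u) = H x := by simp [hu]
    calc H m = H (m + (0:ℝ) • u) := h0.symm
      _ ≤ H (m + (1:ℝ) • u) := hmono (by constructor <;> norm_num) (by constructor <;> norm_num)
          zero_le_one
      _ = H x := h1
  -- upper bound : H x ≤ H m + (c𝒞/2)‖x-m‖²
  have hupp : ∀ x : Euc d, H x ≤ H m + (c * 𝒞) / 2 * ‖x - m‖ ^ 2 := by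
    intro x
    set u : Euc d := x - m with hu
    set χ : ℝ → ℝ := fun t => (c * 𝒞) * ‖u‖ ^ 2 / 2 * t ^ 2 - H (m + t • u) with hχ
    have hχd : ∀ t : ℝ, HasDerivAt χ
        ((c * 𝒞) * ‖u‖ ^ 2 / 2 * (2 * t) - ⟪gradient H (m + t • u), u⟫) t := by
      intro t
      have := ((hasDerivAt_pow 2 t).const_mul ((c * 𝒞) * ‖u‖ ^ 2 / 2)).sub
        (aux_dir_deriv H hH m u t)
      exact this.congr_deriv (by simp)
    have hmono : MonotoneOn χ (Set.Icc 0 1) := by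
      apply monotoneOn_of_deriv_nonneg (convex_Icc 0 1)
      · exact Continuous.continuousOn ((continuous_const.mul (continuous_pow 2)).sub
          (hH.continuous.comp (continuous_const.add (continuous_id.smul continuous_const))))
      · intro t ht
        exact (hχd t).differentiableAt.differentiableWithinAt
      · intro t ht
        rw [interior_Icc] at ht
        rw [(hχd t).deriv]
        have h1 : ⟪gradient H (m + t • u), u⟫ ≤ (c * 𝒞) * (t * ‖u‖) * ‖u‖ := by
          have h2 : ⟪gradient H (m + t • u) - gradient H m, u⟫
              ≤ ‖gradient H (m + t • u) - gradient H m‖ * ‖u‖ := real_inner_le_norm _ _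
          have h3 := hLip (m + t • u) m
          rw [add_sub_cancel_left, norm_smul] at h3
          rw [hgm, sub_zero] at h2
          have h4 : ‖gradient H (m + t • u)‖ * ‖u‖
              ≤ (c * 𝒞) * (t * ‖u‖) * ‖u‖ := by
            apply mul_le_mul_of_nonneg_right _ (norm_nonneg u)
            calc ‖gradient H (m + t • u)‖ ≤ (c * 𝒞) * (‖t‖ * ‖u‖) := by
                  simpa [hgm] using h3
              _ = (c * 𝒞) * (t * ‖u‖) := by
                  rw [Real.norm_eq_abs, abs_of_nonneg ht.1.le]
          linarith
        nlinarith [h1]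
    have h0 : χ 0 = - H m := by simp [hχ]
    have h1 : χ 1 = (c * 𝒞) * ‖u‖ ^ 2 / 2 - H x := by simp [hχ, hu]
    have := hmono (Set.mem_Icc.mpr ⟨le_refl 0, zero_le_one⟩)
      (Set.mem_Icc.mpr ⟨zero_le_one, le_refl 1⟩) zero_le_one
    rw [h0, h1] at this
    nlinarith [this]
  constructor
  -- contDiff
  · exact (contDiff_const.mul ((contDiff_norm_sq (𝕜 := ℝ)).comp
      (contDiff_id.sub contDiff_const))).add contDiff_const
  -- one_le
  · intro x
    have : 0 ≤ a * ‖x - m‖ ^ 2 := by positivity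
    linarith
  · exact hlam
  · positivity
  · exact Real.exp_pos _
  · exact Metric.isBounded_closedBall
  -- drift
  · intro x
    have hVg : gradient (fun x => a * ‖x - m‖ ^ 2 + 1) x = (2*a) • (x - m) :=
      (aux_quad_grad a m x).gradient
    have key : LGen μ (fun x => a * ‖x - m‖ ^ 2 + 1) x
        = -(2 * a * β) * ⟪x - m, gradient H x⟫ + 2 * a * d := by
      unfold LGen
      rw [hVg, hgradμ x, aux_quad_lap a m x]
      rw [inner_neg_right, real_inner_smul_left, real_inner_smul_right]
      ring
    rw [key]
    have hI := hsc' x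
    have hr2 : (0:ℝ) ≤ ‖x - m‖ ^ 2 := by positivity
    have h2ad : 2 * a * (d:ℝ) = lam := by
      rw [hadef]; field_simp
    have hprod : 0 ≤ (2 * a * β) * (⟪x - m, gradient H x⟫ - c * ‖x - m‖ ^ 2) :=
      mul_nonneg (by positivity) (by linarith [hsc' x])
    have e1 : 2 * a * β * (c * ‖x - m‖ ^ 2) = 2 * (a * lam * ‖x - m‖ ^ 2) := by
      rw [hlamdef]; ring
    have e2 : 0 ≤ a * lam * ‖x - m‖ ^ 2 := by positivity
    by_cases hx : x ∈ Metric.closedBall m R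
    · rw [Set.indicator_of_mem hx]
      simp only [Pi.one_apply, mul_one]
      nlinarith [hprod, e1, e2, h2ad]
    · rw [Set.indicator_of_notMem hx]
      have hxR : R < ‖x - m‖ := by
        rw [Metric.mem_closedBall, not_le, dist_eq_norm] at hx
        exact hx
      have hr2R : 4 * d / lam ≤ ‖x - m‖ ^ 2 := by
        rw [← hR2]
        exact pow_le_pow_left₀ (Real.sqrt_nonneg _) hxR.le 2
      have hlr : 4 * (d:ℝ) ≤ lam * ‖x - m‖ ^ 2 := by
        rw [div_le_iff₀ hlam] at hr2R
        linarith [hr2R]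
      have h3 : a * (4 * (d:ℝ)) ≤ a * (lam * ‖x - m‖ ^ 2) :=
        mul_le_mul_of_nonneg_left hlr ha.le
      have h4 : a * (4 * (d:ℝ)) = 2 * lam := by
        rw [hadef]; field_simp; ring
      nlinarith [hprod, e1, h3, h4, h2ad]
  -- ratio
  · intro x hx y hy
    have hRy : ‖y - m‖ ≤ R := by
      rw [Metric.mem_closedBall, dist_eq_norm] at hy
      exact hy
    have hr2y : ‖y - m‖ ^ 2 ≤ 4 * d / lam := by
      rw [← hR2]
      exact pow_le_pow_left₀ (norm_nonneg _) hRy 2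
    have key : β * (H y - H x) ≤ 2 * d * 𝒞 := by
      have h1 := hlow x
      have h2 := hupp y
      have h3 : (c * 𝒞) / 2 * ‖y - m‖ ^ 2 ≤ (c * 𝒞) / 2 * (4 * d / lam) :=
        mul_le_mul_of_nonneg_left hr2y (by positivity)
      have h4 : β * ((c * 𝒞) / 2 * (4 * d / lam)) = 2 * d * 𝒞 := by
        rw [hlamdef]
        field_simp
        ring
      have h5 : H y - H x ≤ (c * 𝒞) / 2 * (4 * d / lam) := by nlinarith [h1, h2, h3]
      calc β * (H y - H x) ≤ β * ((c * 𝒞) / 2 * (4 * d / lam)) :=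
            mul_le_mul_of_nonneg_left h5 hβ.le
        _ = 2 * d * 𝒞 := h4
    rw [hform x, hform y, Real.rpow_def_of_pos (hνpos x), Real.rpow_def_of_pos (hνpos y)]
    have hlog : Real.log (ν x) * β ≤ 2 * d * 𝒞 + Real.log (ν y) * β := by
      have hx' : Real.log (ν x) = - H x := by simp [hHdef]
      have hy' : Real.log (ν y) = - H y := by simp [hHdef]
      rw [hx', hy']
      nlinarith [key]
    calc Z⁻¹ * Real.exp (Real.log (ν x) * β)
        ≤ Z⁻¹ * (Real.exp (2 * d * 𝒞) * Real.exp (Real.log (ν y) * β)) := by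
          apply mul_le_mul_of_nonneg_left _ (by positivity)
          rw [← Real.exp_add]
          exact Real.exp_le_exp.mpr hlog
      _ = Real.exp (2 * d * 𝒞) * (Z⁻¹ * Real.exp (Real.log (ν y) * β)) := by ring

end
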